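/- Theorem 3: Any continuous control is not fragile. That is, if a control k is such that for each finite product set X the correspondence (μ, f) ↦ k(X, μ, f) on Δ°(I×X) × (0,1)^{I×X} is nonempty- and compact-valued, upper hemicontinuous, and lower hemicontinuous, then for every game (X, λ_w, p, G, v_q, v_u, ω) and every δ > 0 there exists ε > 0 such that: (1) for every discriminatory equilibrium (c̄*, d*) and every (μ*, f*) with ‖(μ*,f*) − (μ*_RE, f*_RE)‖₂ ≤ ε, every d̂ ∈ 𝒮_k(μ*, f*) is within ℓ²-distance δ of some element of 𝒮_k(μ*_RE, f*_RE); and (2) every k-controlled ε-equilibrium is within ℓ²-distance δ of some k-controlled equilibrium. -/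

import Mathlib

/-!
Formalization of the Coate–Loury statistical discrimination model with
machine-learning (contractible) beliefs, following Zhu,
"The Impact of Equal Opportunity on Statistical Discrimination".
-/

open scoped BigOperators
open MeasureTheory

noncomputable section

attribute [local instance] Classical.propDecidable

/-- Group identities `I = {w, b}`. -/
inductive GrpI
  | w
  | b
deriving DecidableEq

instance : Fintype GrpI := ⟨{GrpI.w, GrpI.b}, fun x => by cases x <;> simp⟩

/-- Classes `Y = {q, u}` (qualified / unqualified). -/
inductive Cls
  | q
  | u
deriving DecidableEq

instance : Fintype Cls := ⟨{Cls.q, Cls.u}, fun x => by cases x <;> simp⟩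

/-- A game `(X, λ_w, p, G, v_q, v_u, ω)` of the Coate–Loury model.  The set of
other features is the finite product `X = X_1 × ⋯ × X_N`, encoded as the pi type
`(j : Fin N) → Xs j`.  The statistical model (Assumption 1) is encoded through a
nonempty subset `Ysub ⊆ {1, …, N}` together with the factorization
`p(x | i, y) = pY(x_𝒴 | y) · pC(x_{-𝒴} | i, x_𝒴)`.  The cost distribution is
given by an everywhere positive density `g` with `∫ g = 1` and `∫ |c| g(c) dc < ∞`. -/
structure Game (N : ℕ) (Xs : Fin N → Type) [∀ j, Fintype (Xs j)]
    [∀ j, Nonempty (Xs j)] where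
  lamw : ℝ
  lamw_pos : 0 < lamw
  lamw_lt_one : lamw < 1
  Ysub : Finset (Fin N)
  Ysub_nonempty : Ysub.Nonempty
  pY : ((j : Ysub) → Xs j.1) → Cls → ℝ
  pC : GrpI → ((j : Fin N) → Xs j) → ℝ
  pY_pos : ∀ xY y, 0 < pY xY y
  pC_pos : ∀ i x, 0 < pC i x
  pY_sum : ∀ y, ∑ xY, pY xY y = 1
  pC_sum : ∀ (i : GrpI) (xY : (j : Ysub) → Xs j.1),
    ∑ x ∈ Finset.univ.filter
        (fun x : (j : Fin N) → Xs j => (fun j : Ysub => x j.1) = xY),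
      pC i x = 1
  g : ℝ → ℝ
  g_pos : ∀ c, 0 < g c
  g_int : Integrable g
  g_norm : (∫ c, g c) = 1
  g_abs_int : Integrable fun c => |c| * g c
  vq : ℝ
  vu : ℝ
  om : ℝ
  vq_pos : 0 < vq
  vu_pos : 0 < vu
  om_pos : 0 < om

section Policies

variable {N : ℕ} {Xs : Fin N → Type}

/-- A decision policy `d : I × X → [0,1]`. -/
def IsPolicy (d : GrpI → ((j : Fin N) → Xs j) → ℝ) : Prop :=
  ∀ i x, d i x ∈ Set.Icc (0 : ℝ) 1

/-- A decision policy when data is color-blind, `d_cb : X → [0,1]`. -/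
def IsCbPolicy (dcb : ((j : Fin N) → Xs j) → ℝ) : Prop :=
  ∀ x, dcb x ∈ Set.Icc (0 : ℝ) 1

/-- `S ⊆ {1, …, N}` has the dependence property for the belief `f`:
`f` depends on `(i, x)` only up to `(i, x_S)`. -/
def DepProp {I : Type} (f : I → ((j : Fin N) → Xs j) → ℝ)
    (S : Finset (Fin N)) : Prop :=
  ∀ (i : I) (x x' : (j : Fin N) → Xs j), (∀ j ∈ S, x j = x' j) → f i x = f i x'

/-- The minimal subset `Ŷ(f)` with the dependence property. -/
def minDep {I : Type} (f : I → ((j : Fin N) → Xs j) → ℝ) : Finset (Fin N) :=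
  Finset.univ.filter fun j => ∀ S : Finset (Fin N), DepProp f S → j ∈ S

variable [∀ j, Fintype (Xs j)]

/-- Full-support probability distributions on `I × X` (the set `Δ°(I × X)`). -/
def FullSupp (μ : GrpI → ((j : Fin N) → Xs j) → ℝ) : Prop :=
  (∀ i x, 0 < μ i x) ∧ ∑ i, ∑ x, μ i x = 1

/-- Beliefs valued in `(0, 1)`. -/
def OpenBelief (f : GrpI → ((j : Fin N) → Xs j) → ℝ) : Prop :=
  ∀ i x, f i x ∈ Set.Ioo (0 : ℝ) 1

/-- Acceptance rate of group `i`. -/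
def AR (i : GrpI) (d μ : GrpI → ((j : Fin N) → Xs j) → ℝ) : ℝ :=
  (∑ x, d i x * μ i x) / ∑ x, μ i x

/-- True positive rate of group `i`. -/
def TP (i : GrpI) (d μ f : GrpI → ((j : Fin N) → Xs j) → ℝ) : ℝ :=
  (∑ x, d i x * μ i x * f i x) / ∑ x, μ i x * f i x

/-- The equal opportunity control `k(X, μ, f)`. -/
def EOset (μ f : GrpI → ((j : Fin N) → Xs j) → ℝ) :
    Set (GrpI → ((j : Fin N) → Xs j) → ℝ) :=
  {d | IsPolicy d ∧ TP GrpI.w d μ f = TP GrpI.b d μ f}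

/-- The color-blind control: all color-blind decision policies. -/
def CBset : Set (GrpI → ((j : Fin N) → Xs j) → ℝ) :=
  {d | IsPolicy d ∧ ∀ x, d GrpI.w x = d GrpI.b x}

/-- The no proxies control: policies depending on `(i,x)` only through `x_{Ŷ(f)}`. -/
def NoProxies (_μ f : GrpI → ((j : Fin N) → Xs j) → ℝ) :
    Set (GrpI → ((j : Fin N) → Xs j) → ℝ) :=
  {d | IsPolicy d ∧
    ∀ i i' x x', (∀ j ∈ minDep f, x j = x' j) → d i x = d i' x'}

/-- `ℓ²` distance between decision policies. -/
def polDist (d d' : GrpI → ((j : Fin N) → Xs j) → ℝ) : ℝ :=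
  Real.sqrt (∑ i, ∑ x, (d i x - d' i x) ^ 2)

/-- `ℓ²` distance between pairs `(μ, f)`. -/
def pairDist (μ f μ' f' : GrpI → ((j : Fin N) → Xs j) → ℝ) : ℝ :=
  Real.sqrt ((∑ i, ∑ x, (μ i x - μ' i x) ^ 2) + ∑ i, ∑ x, (f i x - f' i x) ^ 2)

/-- `ℓ²` distance between strategy profiles `(c̄, d)`. -/
def profDist (c : GrpI → ℝ) (d : GrpI → ((j : Fin N) → Xs j) → ℝ)
    (c' : GrpI → ℝ) (d' : GrpI → ((j : Fin N) → Xs j) → ℝ) : ℝ :=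
  Real.sqrt ((∑ i, (c i - c' i) ^ 2) + ∑ i, ∑ x, (d i x - d' i x) ^ 2)

end Policies

/-- Upper hemicontinuity of a correspondence on a set. -/
def CorrUpperHemicontinuousOn {α β : Type*} [TopologicalSpace α] [TopologicalSpace β]
    (F : α → Set β) (S : Set α) : Prop :=
  ∀ a ∈ S, ∀ V : Set β, IsOpen V → F a ⊆ V → ∀ᶠ a' in nhdsWithin a S, F a' ⊆ V

/-- Lower hemicontinuity of a correspondence on a set. -/
def CorrLowerHemicontinuousOn {α β : Type*} [TopologicalSpace α] [TopologicalSpace β]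
    (F : α → Set β) (S : Set α) : Prop :=
  ∀ a ∈ S, ∀ V : Set β, IsOpen V → (F a ∩ V).Nonempty →
    ∀ᶠ a' in nhdsWithin a S, (F a' ∩ V).Nonempty

namespace Game

variable {N : ℕ} {Xs : Fin N → Type} [∀ j, Fintype (Xs j)] [∀ j, Nonempty (Xs j)]
variable (Γ : Game N Xs)

/-- Projection `x ↦ x_𝒴`. -/
def proj (x : (j : Fin N) → Xs j) : (j : Γ.Ysub) → Xs j.1 := fun j => x j.1

/-- `p(x | i, y) = p(x_𝒴 | y) · p(x_{-𝒴} | i, x_𝒴)`. -/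
def p (i : GrpI) (x : (j : Fin N) → Xs j) (y : Cls) : ℝ :=
  Γ.pY (Γ.proj x) y * Γ.pC i x

/-- Group probabilities `λ_w`, `λ_b = 1 - λ_w`. -/
def lam : GrpI → ℝ := fun i =>
  match i with
  | GrpI.w => Γ.lamw
  | GrpI.b => 1 - Γ.lamw

/-- The CDF `G` of the cost distribution. -/
def G (c : ℝ) : ℝ := ∫ t in Set.Iic c, Γ.g t

/-- The likelihood function `l(x) = p(x_𝒴 | q) / p(x_𝒴 | u)`. -/
def lhd (x : (j : Fin N) → Xs j) : ℝ :=
  Γ.pY (Γ.proj x) Cls.q / Γ.pY (Γ.proj x) Cls.u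

/-- The likelihood function on `X_𝒴`. -/
def lhdY (xY : (j : Γ.Ysub) → Xs j.1) : ℝ := Γ.pY xY Cls.q / Γ.pY xY Cls.u

/-- The set of likelihood values `{l_1 < … < l_n}`. -/
def LVset : Set ℝ := Set.range Γ.lhd

/-- The assumption that `1` is not a likelihood value
(equivalently, `WW` is single-peaked). -/
def OneNotLV : Prop := (1 : ℝ) ∉ Γ.LVset

/-- The largest likelihood value `l_n`. -/
def lmax : ℝ := sSup Γ.LVset

/-- `⌈ℓ⌉`: the smallest likelihood value `≥ ℓ`. -/
def lceil (ℓ : ℝ) : ℝ := sInf {v | v ∈ Γ.LVset ∧ ℓ ≤ v}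

/-- `⌈ℓ⌉⁻`: the next smallest likelihood value below `⌈ℓ⌉` (or `l_0 = 0`). -/
def lceilm (ℓ : ℝ) : ℝ := sSup (insert 0 {v | v ∈ Γ.LVset ∧ v < Γ.lceil ℓ})

/-- The smallest likelihood value `> ℓ`. -/
def lnext (ℓ : ℝ) : ℝ := sInf {v | v ∈ Γ.LVset ∧ ℓ < v}

/-- The true distribution of features `μ_RE` given cost thresholds `c̄`. -/
def muRE (c : GrpI → ℝ) (i : GrpI) (x : (j : Fin N) → Xs j) : ℝ :=
  Γ.lam i * (Γ.G (c i) * Γ.p i x Cls.q + (1 - Γ.G (c i)) * Γ.p i x Cls.u)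

/-- The true conditional probability (calibrated belief) `f_RE` given `c̄`. -/
def fRE (c : GrpI → ℝ) (i : GrpI) (x : (j : Fin N) → Xs j) : ℝ :=
  Γ.G (c i) * Γ.p i x Cls.q /
    (Γ.G (c i) * Γ.p i x Cls.q + (1 - Γ.G (c i)) * Γ.p i x Cls.u)

/-- Utility `U_i(c̄(i), d(i))` of the representative `i`-applicant. -/
def Uapp (i : GrpI) (ci : ℝ) (di : ((j : Fin N) → Xs j) → ℝ) : ℝ :=
  Γ.om * ∑ x, (Γ.G ci * Γ.p i x Cls.q + (1 - Γ.G ci) * Γ.p i x Cls.u) * di x -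
    ∫ t in Set.Iic ci, t * Γ.g t

/-- Firm utility `U_F(d, μ, f)`. -/
def UF (d μ f : GrpI → ((j : Fin N) → Xs j) → ℝ) : ℝ :=
  ∑ i, ∑ x, d i x * μ i x * (f i x * Γ.vq - (1 - f i x) * Γ.vu)

/-- The color-blind true distribution of features `μ_cb,RE`. -/
def mucbRE (c : GrpI → ℝ) (x : (j : Fin N) → Xs j) : ℝ :=
  Γ.muRE c GrpI.w x + Γ.muRE c GrpI.b x

/-- The color-blind true conditional probability `f_cb,RE`. -/
def fcbRE (c : GrpI → ℝ) (x : (j : Fin N) → Xs j) : ℝ :=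
  (Γ.muRE c GrpI.w x * Γ.fRE c GrpI.w x + Γ.muRE c GrpI.b x * Γ.fRE c GrpI.b x) /
    Γ.mucbRE c x

/-- Firm utility when data is color-blind. -/
def UFcb (dcb μcb fcb : ((j : Fin N) → Xs j) → ℝ) : ℝ :=
  ∑ x, dcb x * μcb x * (fcb x * Γ.vq - (1 - fcb x) * Γ.vu)

/-- `d(i | l_m)`: conditional acceptance probability at likelihood value `lv`. -/
def dcond (i : GrpI) (di : ((j : Fin N) → Xs j) → ℝ) (lv : ℝ) : ℝ :=
  (∑ x ∈ Finset.univ.filter (fun x => Γ.lhd x = lv), Γ.p i x Cls.q * di x) /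
    ∑ x ∈ Finset.univ.filter (fun x => Γ.lhd x = lv), Γ.p i x Cls.q

/-- The within-group policy `d(i)` is associated with the likelihood mixture `ℓ`. -/
def AssociatedWith (i : GrpI) (di : ((j : Fin N) → Xs j) → ℝ) (ℓ : ℝ) : Prop :=
  0 ≤ ℓ ∧ ℓ ≤ Γ.lmax ∧
    ∀ lv ∈ Γ.LVset,
      (Γ.lceil ℓ < lv → Γ.dcond i di lv = 1) ∧
      (lv = Γ.lceil ℓ →
        Γ.dcond i di lv = (Γ.lceil ℓ - ℓ) / (Γ.lceil ℓ - Γ.lceilm ℓ)) ∧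
      (lv < Γ.lceil ℓ → Γ.dcond i di lv = 0)

/-- A decision policy is fair if both within-group policies are associated with
the same likelihood mixture. -/
def Fair (d : GrpI → ((j : Fin N) → Xs j) → ℝ) : Prop :=
  ∃ ℓ, Γ.AssociatedWith GrpI.w (d GrpI.w) ℓ ∧ Γ.AssociatedWith GrpI.b (d GrpI.b) ℓ

/-- `WW(l_m) = ω ∑_{x_𝒴 : l(x_𝒴) > l_m} (p(x_𝒴|q) - p(x_𝒴|u))`. -/
def WWval (t : ℝ) : ℝ :=
  Γ.om * ∑ xY ∈ Finset.univ.filter (fun xY => t < Γ.lhdY xY),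
    (Γ.pY xY Cls.q - Γ.pY xY Cls.u)

/-- The piecewise-linear function `WW` interpolating the points `(l_m, WW(l_m))`. -/
def WW (ℓ : ℝ) : ℝ :=
  if Γ.lceil ℓ = Γ.lceilm ℓ then Γ.WWval (Γ.lceil ℓ)
  else
    (Γ.WWval (Γ.lceilm ℓ) * (Γ.lceil ℓ - ℓ) +
        Γ.WWval (Γ.lceil ℓ) * (ℓ - Γ.lceilm ℓ)) /
      (Γ.lceil ℓ - Γ.lceilm ℓ)

/-- `EĒ(l_m)`: the unique cost with `G(EĒ(l_m)) = 1 / ((v_q/v_u) l_m + 1)`. -/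
def EEbar (lv : ℝ) : ℝ := sInf {cc | 1 / (Γ.vq / Γ.vu * lv + 1) ≤ Γ.G cc}

/-- The correspondence `EE : [0, l_n] ⇒ ℝ`. -/
def EE (ℓ : ℝ) : Set ℝ :=
  if ℓ = 0 then Set.Ici (Γ.EEbar (Γ.lceil 0))
  else if ℓ = Γ.lmax then Set.Iic (Γ.EEbar Γ.lmax)
  else if ℓ ∈ Γ.LVset then Set.Icc (Γ.EEbar (Γ.lnext ℓ)) (Γ.EEbar ℓ)
  else {Γ.EEbar (Γ.lceil ℓ)}

/-- Each representative applicant's cost threshold is a best response to `d`. -/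
def BestResponds (c : GrpI → ℝ) (d : GrpI → ((j : Fin N) → Xs j) → ℝ) : Prop :=
  ∀ (i : GrpI) (c' : ℝ), Γ.Uapp i c' (d i) ≤ Γ.Uapp i (c i) (d i)

/-- An (un-controlled) equilibrium. -/
def IsEquilibrium (c : GrpI → ℝ) (d : GrpI → ((j : Fin N) → Xs j) → ℝ) : Prop :=
  IsPolicy d ∧ Γ.BestResponds c d ∧
    ∀ d', IsPolicy d' →
      Γ.UF d' (Γ.muRE c) (Γ.fRE c) ≤ Γ.UF d (Γ.muRE c) (Γ.fRE c)

/-- A `k`-controlled equilibrium, for the control `(μ, f) ↦ K μ f`. -/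
def IsControlledEq
    (K : (GrpI → ((j : Fin N) → Xs j) → ℝ) → (GrpI → ((j : Fin N) → Xs j) → ℝ) →
      Set (GrpI → ((j : Fin N) → Xs j) → ℝ))
    (c : GrpI → ℝ) (d : GrpI → ((j : Fin N) → Xs j) → ℝ) : Prop :=
  d ∈ K (Γ.muRE c) (Γ.fRE c) ∧ Γ.BestResponds c d ∧
    ∀ d' ∈ K (Γ.muRE c) (Γ.fRE c),
      Γ.UF d' (Γ.muRE c) (Γ.fRE c) ≤ Γ.UF d (Γ.muRE c) (Γ.fRE c)

/-- `𝒮_k(μ, f)`: firm-optimal policies under the control `K` at `(μ, f)`. -/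
def Smax
    (K : (GrpI → ((j : Fin N) → Xs j) → ℝ) → (GrpI → ((j : Fin N) → Xs j) → ℝ) →
      Set (GrpI → ((j : Fin N) → Xs j) → ℝ))
    (μ f : GrpI → ((j : Fin N) → Xs j) → ℝ) :
    Set (GrpI → ((j : Fin N) → Xs j) → ℝ) :=
  {d | d ∈ K μ f ∧ ∀ d' ∈ K μ f, Γ.UF d' μ f ≤ Γ.UF d μ f}

/-- A `k`-controlled `ε`-equilibrium. -/
def IsCtrlEpsEq
    (K : (GrpI → ((j : Fin N) → Xs j) → ℝ) → (GrpI → ((j : Fin N) → Xs j) → ℝ) →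
      Set (GrpI → ((j : Fin N) → Xs j) → ℝ))
    (ε : ℝ) (c : GrpI → ℝ) (d : GrpI → ((j : Fin N) → Xs j) → ℝ) : Prop :=
  ∃ μ f, FullSupp μ ∧ OpenBelief f ∧
    pairDist μ f (Γ.muRE c) (Γ.fRE c) ≤ ε ∧
    Γ.BestResponds c d ∧ d ∈ K μ f ∧ ∀ d' ∈ K μ f, Γ.UF d' μ f ≤ Γ.UF d μ f

/-- Best responses of applicants to a color-blind policy. -/
def BestRespondsCb (c : GrpI → ℝ) (dcb : ((j : Fin N) → Xs j) → ℝ) : Prop :=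
  ∀ (i : GrpI) (c' : ℝ), Γ.Uapp i c' dcb ≤ Γ.Uapp i (c i) dcb

/-- An equilibrium when data is color-blind (unrestricted control). -/
def IsCbEquilibrium (c : GrpI → ℝ) (dcb : ((j : Fin N) → Xs j) → ℝ) : Prop :=
  IsCbPolicy dcb ∧ Γ.BestRespondsCb c dcb ∧
    ∀ dcb', IsCbPolicy dcb' →
      Γ.UFcb dcb' (Γ.mucbRE c) (Γ.fcbRE c) ≤ Γ.UFcb dcb (Γ.mucbRE c) (Γ.fcbRE c)

/-- A `k_cb`-controlled equilibrium when data is color-blind. -/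
def IsCbControlledEq (K : Set (((j : Fin N) → Xs j) → ℝ)) (c : GrpI → ℝ)
    (dcb : ((j : Fin N) → Xs j) → ℝ) : Prop :=
  dcb ∈ K ∧ Γ.BestRespondsCb c dcb ∧
    ∀ dcb' ∈ K,
      Γ.UFcb dcb' (Γ.mucbRE c) (Γ.fcbRE c) ≤ Γ.UFcb dcb (Γ.mucbRE c) (Γ.fcbRE c)

end Game

/-- A control when data is color-blind: for each `X` and each
`(μ_cb, f_cb) ∈ Δ°(X) × (0,1)^X` it specifies a nonempty compact set of
color-blind decision policies. -/
structure CbControl : Type 1 where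
  sets : ∀ (N : ℕ) (Xs : Fin N → Type) [∀ j, Fintype (Xs j)] [∀ j, Nonempty (Xs j)],
    (((j : Fin N) → Xs j) → ℝ) → (((j : Fin N) → Xs j) → ℝ) →
      Set (((j : Fin N) → Xs j) → ℝ)
  nonempty : ∀ (N : ℕ) (Xs : Fin N → Type) [∀ j, Fintype (Xs j)]
    [∀ j, Nonempty (Xs j)] (μ f : ((j : Fin N) → Xs j) → ℝ),
    (∀ x, 0 < μ x) → (∑ x, μ x = 1) → (∀ x, f x ∈ Set.Ioo (0 : ℝ) 1) →
    (sets N Xs μ f).Nonempty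
  compact : ∀ (N : ℕ) (Xs : Fin N → Type) [∀ j, Fintype (Xs j)]
    [∀ j, Nonempty (Xs j)] (μ f : ((j : Fin N) → Xs j) → ℝ),
    (∀ x, 0 < μ x) → (∑ x, μ x = 1) → (∀ x, f x ∈ Set.Ioo (0 : ℝ) 1) →
    IsCompact (sets N Xs μ f)
  mem_policy : ∀ (N : ℕ) (Xs : Fin N → Type) [∀ j, Fintype (Xs j)]
    [∀ j, Nonempty (Xs j)] (μ f : ((j : Fin N) → Xs j) → ℝ),
    (∀ x, 0 < μ x) → (∑ x, μ x = 1) → (∀ x, f x ∈ Set.Ioo (0 : ℝ) 1) →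
    sets N Xs μ f ⊆ {dcb | IsCbPolicy dcb}

section Aux

open MeasureTheory Filter

namespace Game

variable {N : ℕ} {Xs : Fin N → Type} [∀ j, Fintype (Xs j)] [∀ j, Nonempty (Xs j)]
variable (Γ : Game N Xs)

lemma _root_.setInt_pos {a b : ℝ} (hab : a < b) (h : ℝ → ℝ)
    (hh : ∀ t ∈ Set.Ioc a b, 0 ≤ h t) (hh2 : ∀ t ∈ Set.Ioo a b, 0 < h t)
    (hint : IntegrableOn h (Set.Ioc a b)) :
    0 < ∫ t in Set.Ioc a b, h t := by
  rw [MeasureTheory.setIntegral_pos_iff_support_of_nonneg_ae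
    ((MeasureTheory.ae_restrict_iff' measurableSet_Ioc).2 (Filter.Eventually.of_forall hh)) hint]
  have hsub : Set.Ioo a b ⊆ Function.support h ∩ Set.Ioc a b := by
    intro t ht
    exact ⟨ne_of_gt (hh2 t ht), Set.Ioo_subset_Ioc_self ht⟩
  calc (0 : ENNReal) < volume (Set.Ioo a b) := by
        rw [Real.volume_Ioo]; exact ENNReal.ofReal_pos.2 (by linarith)
    _ ≤ _ := measure_mono hsub

lemma G_sub_G (a b : ℝ) : Γ.G b - Γ.G a = ∫ t in a..b, Γ.g t :=
  intervalIntegral.integral_Iic_sub_Iic Γ.g_int.integrableOn Γ.g_int.integrableOn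

lemma G_strictMono : StrictMono Γ.G := by
  intro a b hab
  have h := Γ.G_sub_G a b
  rw [intervalIntegral.integral_of_le hab.le] at h
  have hpos : 0 < ∫ t in Set.Ioc a b, Γ.g t :=
    setInt_pos hab _ (fun t _ => (Γ.g_pos t).le) (fun t _ => Γ.g_pos t)
      Γ.g_int.integrableOn
  linarith

lemma G_pos (c : ℝ) : 0 < Γ.G c := by
  rw [Game.G, MeasureTheory.setIntegral_pos_iff_support_of_nonneg_ae
    ((MeasureTheory.ae_restrict_iff' measurableSet_Iic).2
      (Filter.Eventually.of_forall fun t _ => (Γ.g_pos t).le)) Γ.g_int.integrableOn]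
  have hsub : Set.Iic c ⊆ Function.support Γ.g ∩ Set.Iic c :=
    fun t ht => ⟨ne_of_gt (Γ.g_pos t), ht⟩
  calc (0 : ENNReal) < volume (Set.Iic c) := by simp [Real.volume_Iic]
    _ ≤ _ := measure_mono hsub

lemma G_lt_one (c : ℝ) : Γ.G c < 1 := by
  have hcompl := MeasureTheory.integral_add_compl (s := Set.Iic c) measurableSet_Iic Γ.g_int
  rw [Γ.g_norm] at hcompl
  have : 0 < ∫ t in (Set.Iic c)ᶜ, Γ.g t := by
    rw [Set.compl_Iic, MeasureTheory.setIntegral_pos_iff_support_of_nonneg_ae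
      ((MeasureTheory.ae_restrict_iff' measurableSet_Ioi).2
        (Filter.Eventually.of_forall fun t _ => (Γ.g_pos t).le)) Γ.g_int.integrableOn]
    have hsub : Set.Ioi c ⊆ Function.support Γ.g ∩ Set.Ioi c :=
      fun t ht => ⟨ne_of_gt (Γ.g_pos t), ht⟩
    calc (0 : ENNReal) < volume (Set.Ioi c) := by simp [Real.volume_Ioi]
      _ ≤ _ := measure_mono hsub
  have : Γ.G c = 1 - ∫ t in (Set.Iic c)ᶜ, Γ.g t := by rw [Game.G]; linarith
  linarith

lemma G_continuous : Continuous Γ.G := by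
  have h : ∀ c, Γ.G c = Γ.G 0 + ∫ t in (0:ℝ)..c, Γ.g t := by
    intro c; have := Γ.G_sub_G 0 c; linarith
  have hc : Continuous fun c => Γ.G 0 + ∫ t in (0:ℝ)..c, Γ.g t :=
    continuous_const.add (intervalIntegral.continuous_primitive
      (fun a b => Γ.g_int.intervalIntegrable) 0)
  exact (funext h : Γ.G = _) ▸ hc

lemma tg_int : Integrable (fun t => t * Γ.g t) := by
  refine Γ.g_abs_int.mono' ?_ (Filter.Eventually.of_forall fun t => ?_)
  · exact (measurable_id.aemeasurable.aestronglyMeasurable).mul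
      Γ.g_int.aestronglyMeasurable
  · rw [Real.norm_eq_abs, abs_mul, abs_of_nonneg (Γ.g_pos t).le]

end Game

end Aux
section Aux2

open MeasureTheory Filter

namespace Game

variable {N : ℕ} {Xs : Fin N → Type} [∀ j, Fintype (Xs j)] [∀ j, Nonempty (Xs j)]
variable (Γ : Game N Xs)

/-- The best-response threshold. -/
def BR (i : GrpI) (di : ((j : Fin N) → Xs j) → ℝ) : ℝ :=
  Γ.om * ∑ x, (Γ.p i x Cls.q - Γ.p i x Cls.u) * di x

lemma Uapp_eq (i : GrpI) (ci : ℝ) (di : ((j : Fin N) → Xs j) → ℝ) :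
    Γ.Uapp i ci di = Γ.om * ∑ x, Γ.p i x Cls.u * di x + Γ.G ci * Γ.BR i di
      - ∫ t in Set.Iic ci, t * Γ.g t := by
  rw [Game.Uapp, Game.BR]
  rw [show ∑ x, (Γ.G ci * Γ.p i x Cls.q + (1 - Γ.G ci) * Γ.p i x Cls.u) * di x
      = ∑ x, (Γ.p i x Cls.u * di x + Γ.G ci * ((Γ.p i x Cls.q - Γ.p i x Cls.u) * di x)) by
    apply Finset.sum_congr rfl; intro x _; ring]
  rw [Finset.sum_add_distrib, ← Finset.mul_sum]
  ring

lemma Uapp_lt (i : GrpI) (di : ((j : Fin N) → Xs j) → ℝ) {c' : ℝ}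
    (hne : c' ≠ Γ.BR i di) : Γ.Uapp i c' di < Γ.Uapp i (Γ.BR i di) di := by
  set B := Γ.BR i di with hB
  have hdiff : Γ.Uapp i B di - Γ.Uapp i c' di = ∫ t in c'..B, (B - t) * Γ.g t := by
    rw [Γ.Uapp_eq i B di, Γ.Uapp_eq i c' di]
    have h1 : Γ.G B - Γ.G c' = ∫ t in c'..B, Γ.g t := Γ.G_sub_G c' B
    have h2 : (∫ t in Set.Iic B, t * Γ.g t) - ∫ t in Set.Iic c', t * Γ.g t
        = ∫ t in c'..B, t * Γ.g t :=
      intervalIntegral.integral_Iic_sub_Iic Γ.tg_int.integrableOn Γ.tg_int.integrableOn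
    have h3 : ∫ t in c'..B, (B - t) * Γ.g t
        = B * (∫ t in c'..B, Γ.g t) - ∫ t in c'..B, t * Γ.g t := by
      rw [← intervalIntegral.integral_const_mul, ← intervalIntegral.integral_sub
        (Γ.g_int.intervalIntegrable.const_mul B) Γ.tg_int.intervalIntegrable]
      apply intervalIntegral.integral_congr; intro t _; ring
    rw [h3, ← h1, ← h2]; ring
  have hint : IntegrableOn (fun t => (B - t) * Γ.g t) (Set.Ioc (min c' B) (max c' B)) :=
    ((Γ.g_int.const_mul B).sub Γ.tg_int).integrableOn.congr_fun
      (fun t _ => by simp [Pi.sub_apply]; ring) measurableSet_Ioc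
  have hpos : 0 < ∫ t in c'..B, (B - t) * Γ.g t := by
    rcases lt_or_gt_of_ne hne with h | h
    · rw [intervalIntegral.integral_of_le h.le]
      apply setInt_pos h
      · intro t ht; exact mul_nonneg (by linarith [ht.2]) (Γ.g_pos t).le
      · intro t ht; exact mul_pos (by linarith [ht.2]) (Γ.g_pos t)
      · have := hint; rwa [min_eq_left h.le, max_eq_right h.le] at this
    · rw [intervalIntegral.integral_symm B c', intervalIntegral.integral_of_le h.le]
      have : 0 < ∫ t in Set.Ioc B c', -((B - t) * Γ.g t) := by
        apply setInt_pos h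
        · intro t ht; rw [neg_mul_eq_neg_mul]; exact mul_nonneg (by linarith [ht.1]) (Γ.g_pos t).le
        · intro t ht; rw [neg_mul_eq_neg_mul]; exact mul_pos (by linarith [ht.1]) (Γ.g_pos t)
        · apply Integrable.neg
          have := hint; rwa [min_eq_right h.le, max_eq_left h.le] at this
      rw [MeasureTheory.integral_neg] at this
      exact this
  linarith

lemma bestResponds_iff (c : GrpI → ℝ) (d : GrpI → ((j : Fin N) → Xs j) → ℝ) :
    Γ.BestResponds c d ↔ ∀ i, c i = Γ.BR i (d i) := by
  constructor
  · intro h i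
    by_contra hne
    exact absurd (h i (Γ.BR i (d i))) (not_le.2 (Γ.Uapp_lt i (d i) hne))
  · intro h i c'
    rw [h i]
    rcases eq_or_ne c' (Γ.BR i (d i)) with h' | h'
    · rw [h']
    · exact (Γ.Uapp_lt i (d i) h').le

end Game

end Aux2
section Aux3

open MeasureTheory Filter

namespace Game

variable {N : ℕ} {Xs : Fin N → Type} [∀ j, Fintype (Xs j)] [∀ j, Nonempty (Xs j)]
variable (Γ : Game N Xs)

lemma sum_fiber (i : GrpI) (h : ((j : Γ.Ysub) → Xs j.1) → ℝ) :
    ∑ x, Γ.pC i x * h (Γ.proj x) = ∑ xY, h xY := by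
  rw [← Finset.sum_fiberwise Finset.univ (fun x => Γ.proj x) (fun x => Γ.pC i x * h (Γ.proj x))]
  apply Finset.sum_congr rfl
  intro xY _
  have : ∀ x ∈ Finset.univ.filter (fun x => Γ.proj x = xY),
      Γ.pC i x * h (Γ.proj x) = Γ.pC i x * h xY := by
    intro x hx
    rw [(Finset.mem_filter.1 hx).2]
  rw [Finset.sum_congr rfl this, ← Finset.sum_mul]
  have hps := Γ.pC_sum i xY
  have hfe : Finset.univ.filter (fun x : (j : Fin N) → Xs j => Γ.proj x = xY)
      = Finset.univ.filter (fun x : (j : Fin N) → Xs j => (fun j : Γ.Ysub => x j.1) = xY) := by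
    apply Finset.filter_congr
    intro x _
    rfl
  rw [hfe, hps, one_mul]

lemma p_sum (i : GrpI) (y : Cls) : ∑ x, Γ.p i x y = 1 := by
  have : ∀ x, Γ.p i x y = Γ.pC i x * Γ.pY (Γ.proj x) y := by
    intro x; rw [Game.p, mul_comm]
  rw [Finset.sum_congr rfl (fun x _ => this x), Γ.sum_fiber i (fun xY => Γ.pY xY y), Γ.pY_sum]

lemma lam_pos (i : GrpI) : 0 < Γ.lam i := by
  cases i
  · exact Γ.lamw_pos
  · simp [Game.lam]; linarith [Γ.lamw_lt_one]

lemma muRE_denom_pos (c : GrpI → ℝ) (i : GrpI) (x : (j : Fin N) → Xs j) :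
    0 < Γ.G (c i) * Γ.p i x Cls.q + (1 - Γ.G (c i)) * Γ.p i x Cls.u := by
  have h1 := Γ.G_pos (c i)
  have h2 := Γ.G_lt_one (c i)
  have h3 : 0 < Γ.p i x Cls.q := mul_pos (Γ.pY_pos _ _) (Γ.pC_pos _ _)
  have h4 : 0 < Γ.p i x Cls.u := mul_pos (Γ.pY_pos _ _) (Γ.pC_pos _ _)
  have := mul_pos h1 h3
  have := mul_pos (by linarith : (0:ℝ) < 1 - Γ.G (c i)) h4
  linarith

lemma muRE_mem (c : GrpI → ℝ) : FullSupp (Γ.muRE c) := by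
  constructor
  · intro i x
    exact mul_pos (Γ.lam_pos i) (Γ.muRE_denom_pos c i x)
  · have hsum : ∀ i, ∑ x, Γ.muRE c i x = Γ.lam i := by
      intro i
      calc ∑ x, Γ.muRE c i x
          = ∑ x, (Γ.lam i * Γ.G (c i) * Γ.p i x Cls.q
              + Γ.lam i * (1 - Γ.G (c i)) * Γ.p i x Cls.u) :=
            Finset.sum_congr rfl (by intro x _; rw [Game.muRE]; ring)
        _ = Γ.lam i * Γ.G (c i) * (∑ x, Γ.p i x Cls.q)
              + Γ.lam i * (1 - Γ.G (c i)) * (∑ x, Γ.p i x Cls.u) := by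
            rw [Finset.sum_add_distrib, ← Finset.mul_sum, ← Finset.mul_sum]
        _ = Γ.lam i := by rw [Γ.p_sum, Γ.p_sum]; ring
    rw [show (Finset.univ : Finset GrpI) = {GrpI.w, GrpI.b} from rfl,
      Finset.sum_pair (by decide)]
    rw [hsum GrpI.w, hsum GrpI.b]
    simp [Game.lam]

lemma fRE_mem (c : GrpI → ℝ) : OpenBelief (Γ.fRE c) := by
  intro i x
  have hD := Γ.muRE_denom_pos c i x
  have h1 := Γ.G_pos (c i)
  have h2 := Γ.G_lt_one (c i)
  have h3 : 0 < Γ.p i x Cls.q := mul_pos (Γ.pY_pos _ _) (Γ.pC_pos _ _)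
  have h4 : 0 < Γ.p i x Cls.u := mul_pos (Γ.pY_pos _ _) (Γ.pC_pos _ _)
  constructor
  · rw [Game.fRE]; exact div_pos (mul_pos h1 h3) hD
  · rw [Game.fRE, div_lt_one hD]
    nlinarith

end Game

end Aux3
section Aux4

open MeasureTheory Filter

namespace Game

variable {N : ℕ} {Xs : Fin N → Type} [∀ j, Fintype (Xs j)] [∀ j, Nonempty (Xs j)]
variable (Γ : Game N Xs)

/-- The firm's net benefit coefficient on `X_𝒴`, given threshold `γ`. -/
def tval (γ : ℝ) (xY : (j : Γ.Ysub) → Xs j.1) : ℝ :=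
  Γ.G γ * Γ.pY xY Cls.q * Γ.vq - (1 - Γ.G γ) * Γ.pY xY Cls.u * Γ.vu

/-- Candidate set of equilibrium thresholds. -/
def Fcand : Set ℝ :=
  {γ | ∃ xY, Γ.tval γ xY = 0} ∪
    ↑(Finset.image
        (fun s : Finset ((j : Γ.Ysub) → Xs j.1) =>
          Γ.om * ∑ xY ∈ s, (Γ.pY xY Cls.q - Γ.pY xY Cls.u))
        (Finset.univ.powerset))

lemma Fcand_finite : Γ.Fcand.Finite := by
  apply Set.Finite.union _ (Finset.finite_toSet _)
  have : {γ | ∃ xY, Γ.tval γ xY = 0}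
      = ⋃ xY ∈ (Set.univ : Set ((j : Γ.Ysub) → Xs j.1)), {γ | Γ.tval γ xY = 0} := by
    ext γ; simp
  rw [this]
  apply Set.Finite.biUnion Set.finite_univ
  intro xY _
  apply Set.Subsingleton.finite
  intro γ1 h1 γ2 h2
  simp only [Set.mem_setOf_eq, Game.tval] at h1 h2
  have hq := Γ.pY_pos xY Cls.q
  have hu := Γ.pY_pos xY Cls.u
  have hco : 0 < Γ.pY xY Cls.q * Γ.vq + Γ.pY xY Cls.u * Γ.vu := by
    have := Γ.vq_pos; have := Γ.vu_pos; nlinarith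
  have hG : Γ.G γ1 = Γ.G γ2 := by
    have e1 : Γ.G γ1 * (Γ.pY xY Cls.q * Γ.vq + Γ.pY xY Cls.u * Γ.vu)
        = Γ.pY xY Cls.u * Γ.vu := by nlinarith
    have e2 : Γ.G γ2 * (Γ.pY xY Cls.q * Γ.vq + Γ.pY xY Cls.u * Γ.vu)
        = Γ.pY xY Cls.u * Γ.vu := by nlinarith
    have := e1.trans e2.symm
    exact mul_right_cancel₀ (ne_of_gt hco) this
  exact Γ.G_strictMono.injective hG

lemma coeff_eq (c : GrpI → ℝ) (i : GrpI) (x : (j : Fin N) → Xs j) :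
    Γ.muRE c i x * (Γ.fRE c i x * Γ.vq - (1 - Γ.fRE c i x) * Γ.vu)
      = Γ.lam i * Γ.pC i x * Γ.tval (c i) (Γ.proj x) := by
  have hD := Γ.muRE_denom_pos c i x
  rw [Game.muRE, Game.fRE, Game.tval]
  rw [show Γ.p i x Cls.q = Γ.pY (Γ.proj x) Cls.q * Γ.pC i x from rfl,
    show Γ.p i x Cls.u = Γ.pY (Γ.proj x) Cls.u * Γ.pC i x from rfl] at *
  linear_combination (Γ.lam i * (Γ.G (c i) * (Γ.pY (Γ.proj x) Cls.q * Γ.pC i x)) *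
    (Γ.vq + Γ.vu)) * (mul_inv_cancel₀ hD.ne')

lemma opt_pointwise (c : GrpI → ℝ) (d : GrpI → ((j : Fin N) → Xs j) → ℝ)
    (hpol : IsPolicy d)
    (hopt : ∀ d', IsPolicy d' →
      Γ.UF d' (Γ.muRE c) (Γ.fRE c) ≤ Γ.UF d (Γ.muRE c) (Γ.fRE c))
    (i : GrpI) (x : (j : Fin N) → Xs j) :
    (0 < Γ.tval (c i) (Γ.proj x) → d i x = 1) ∧
    (Γ.tval (c i) (Γ.proj x) < 0 → d i x = 0) := by
  classical
  set co : ℝ := Γ.muRE c i x * (Γ.fRE c i x * Γ.vq - (1 - Γ.fRE c i x) * Γ.vu) with hco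
  set dv : ℝ → GrpI → ((j : Fin N) → Xs j) → ℝ :=
    fun v i' x' => if i' = i ∧ x' = x then v else d i' x' with hdv
  have hdvpol : ∀ v, v ∈ Set.Icc (0:ℝ) 1 → IsPolicy (dv v) := by
    intro v hv i' x'
    show (if i' = i ∧ x' = x then v else d i' x') ∈ Set.Icc (0:ℝ) 1
    by_cases h : i' = i ∧ x' = x
    · rw [if_pos h]; exact hv
    · rw [if_neg h]; exact hpol i' x'
  have hdiff : ∀ v, Γ.UF (dv v) (Γ.muRE c) (Γ.fRE c) - Γ.UF d (Γ.muRE c) (Γ.fRE c)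
      = (v - d i x) * co := by
    intro v
    rw [Game.UF, Game.UF, ← Finset.sum_sub_distrib]
    have hterm : ∀ i', (∑ x', dv v i' x' * Γ.muRE c i' x' *
          (Γ.fRE c i' x' * Γ.vq - (1 - Γ.fRE c i' x') * Γ.vu))
        - (∑ x', d i' x' * Γ.muRE c i' x' *
          (Γ.fRE c i' x' * Γ.vq - (1 - Γ.fRE c i' x') * Γ.vu))
        = ∑ x', ((dv v i' x' - d i' x') * (Γ.muRE c i' x' *
          (Γ.fRE c i' x' * Γ.vq - (1 - Γ.fRE c i' x') * Γ.vu))) := by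
      intro i'
      rw [← Finset.sum_sub_distrib]
      exact Finset.sum_congr rfl (fun x' _ => by ring)
    rw [Finset.sum_congr rfl (fun i' _ => hterm i')]
    rw [Finset.sum_eq_single_of_mem i (Finset.mem_univ i)
      (fun i' _ hi' => Finset.sum_eq_zero fun x' _ => by
        have h : dv v i' x' = d i' x' := by
          show (if i' = i ∧ x' = x then v else d i' x') = d i' x'
          exact if_neg (by tauto)
        rw [h, sub_self, zero_mul]),
      Finset.sum_eq_single_of_mem x (Finset.mem_univ x)
      (fun x' _ hx' => by
        have h : dv v i x' = d i x' := by
          show (if i = i ∧ x' = x then v else d i x') = d i x'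
          exact if_neg (by tauto)
        rw [h, sub_self, zero_mul])]
    have h : dv v i x = v := by
      show (if i = i ∧ x = x then v else d i x) = v
      exact if_pos ⟨rfl, rfl⟩
    rw [h, hco]
  have hsign : co = Γ.lam i * Γ.pC i x * Γ.tval (c i) (Γ.proj x) := Γ.coeff_eq c i x
  have hlp : 0 < Γ.lam i * Γ.pC i x := mul_pos (Γ.lam_pos i) (Γ.pC_pos i x)
  constructor
  · intro ht
    have hcopos : 0 < co := by rw [hsign]; exact mul_pos hlp ht
    have h1 := hopt (dv 1) (hdvpol 1 (by norm_num))
    have h2 : (1 - d i x) * co ≤ 0 := by rw [← hdiff 1]; linarith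
    have h3 : 1 - d i x ≤ 0 := by nlinarith
    exact le_antisymm (hpol i x).2 (by linarith)
  · intro ht
    have hconeg : co < 0 := by
      rw [hsign]
      exact mul_neg_of_pos_of_neg hlp ht
    have h1 := hopt (dv 0) (hdvpol 0 (by norm_num))
    have h2 : (0 - d i x) * co ≤ 0 := by rw [← hdiff 0]; linarith
    have h3 : 0 - d i x ≥ 0 := by nlinarith
    exact le_antisymm (by linarith) (hpol i x).1

lemma eq_threshold_mem {c : GrpI → ℝ} {d : GrpI → ((j : Fin N) → Xs j) → ℝ}
    (hEq : Γ.IsEquilibrium c d) (i : GrpI) : c i ∈ Γ.Fcand := by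
  classical
  obtain ⟨hpol, hbr, hopt⟩ := hEq
  have hc : c i = Γ.BR i (d i) := (Γ.bestResponds_iff c d).1 hbr i
  by_cases hT : ∃ xY, Γ.tval (c i) xY = 0
  · exact Or.inl hT
  · right
    push_neg at hT
    have hd : ∀ x, d i x = if 0 < Γ.tval (c i) (Γ.proj x) then (1:ℝ) else 0 := by
      intro x
      rcases lt_trichotomy (Γ.tval (c i) (Γ.proj x)) 0 with h | h | h
      · rw [if_neg (by linarith), (Γ.opt_pointwise c d hpol hopt i x).2 h]
      · exact absurd h (hT (Γ.proj x))
      · rw [if_pos h, (Γ.opt_pointwise c d hpol hopt i x).1 h]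
    have hsum : ∑ x, (Γ.p i x Cls.q - Γ.p i x Cls.u) * d i x
        = ∑ xY ∈ Finset.univ.filter (fun xY => 0 < Γ.tval (c i) xY),
            (Γ.pY xY Cls.q - Γ.pY xY Cls.u) := by
      have h1 : ∀ x, (Γ.p i x Cls.q - Γ.p i x Cls.u) * d i x
          = Γ.pC i x * ((fun xY => (Γ.pY xY Cls.q - Γ.pY xY Cls.u) *
              (if 0 < Γ.tval (c i) xY then (1:ℝ) else 0)) (Γ.proj x)) := by
        intro x
        rw [hd x, show Γ.p i x Cls.q = Γ.pY (Γ.proj x) Cls.q * Γ.pC i x from rfl,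
          show Γ.p i x Cls.u = Γ.pY (Γ.proj x) Cls.u * Γ.pC i x from rfl]
        ring
      rw [Finset.sum_congr rfl (fun x _ => h1 x),
        Γ.sum_fiber i (fun xY => (Γ.pY xY Cls.q - Γ.pY xY Cls.u) *
          if 0 < Γ.tval (c i) xY then (1:ℝ) else 0)]
      rw [Finset.sum_filter]
      apply Finset.sum_congr rfl
      intro xY _
      by_cases h : 0 < Γ.tval (c i) xY
      · rw [if_pos h, if_pos h, mul_one]
      · rw [if_neg h, if_neg h, mul_zero]
    rw [Finset.mem_coe, Finset.mem_image]
    refine ⟨Finset.univ.filter (fun xY => 0 < Γ.tval (c i) xY),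
      Finset.mem_powerset.2 (Finset.subset_univ _), ?_⟩
    conv_rhs => rw [hc]
    rw [Game.BR, hsum]

end Game

end Aux4
section Aux5

open MeasureTheory Filter Metric

variable {N : ℕ} {Xs : Fin N → Type} [∀ j, Fintype (Xs j)] [∀ j, Nonempty (Xs j)]

lemma abs_mu_le_pairDist (μ f μ' f' : GrpI → ((j : Fin N) → Xs j) → ℝ)
    (i : GrpI) (x : (j : Fin N) → Xs j) :
    |μ i x - μ' i x| ≤ pairDist μ f μ' f' := by
  have hS1 : (μ i x - μ' i x)^2 ≤ ∑ i', ∑ x', (μ i' x' - μ' i' x')^2 := by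
    calc (μ i x - μ' i x)^2 ≤ ∑ x', (μ i x' - μ' i x')^2 :=
          Finset.single_le_sum (f := fun x' => (μ i x' - μ' i x')^2)
            (fun _ _ => sq_nonneg _) (Finset.mem_univ x)
      _ ≤ _ := Finset.single_le_sum
          (f := fun i' => ∑ x', (μ i' x' - μ' i' x')^2)
          (fun _ _ => Finset.sum_nonneg fun _ _ => sq_nonneg _) (Finset.mem_univ i)
  have hS2 : (0:ℝ) ≤ ∑ i', ∑ x', (f i' x' - f' i' x')^2 :=
    Finset.sum_nonneg fun _ _ => Finset.sum_nonneg fun _ _ => sq_nonneg _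
  calc |μ i x - μ' i x| = Real.sqrt ((μ i x - μ' i x)^2) := (Real.sqrt_sq_eq_abs _).symm
    _ ≤ pairDist μ f μ' f' := Real.sqrt_le_sqrt (by linarith)

lemma abs_f_le_pairDist (μ f μ' f' : GrpI → ((j : Fin N) → Xs j) → ℝ)
    (i : GrpI) (x : (j : Fin N) → Xs j) :
    |f i x - f' i x| ≤ pairDist μ f μ' f' := by
  have hS1 : (f i x - f' i x)^2 ≤ ∑ i', ∑ x', (f i' x' - f' i' x')^2 := by
    calc (f i x - f' i x)^2 ≤ ∑ x', (f i x' - f' i x')^2 :=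
          Finset.single_le_sum (f := fun x' => (f i x' - f' i x')^2)
            (fun _ _ => sq_nonneg _) (Finset.mem_univ x)
      _ ≤ _ := Finset.single_le_sum
          (f := fun i' => ∑ x', (f i' x' - f' i' x')^2)
          (fun _ _ => Finset.sum_nonneg fun _ _ => sq_nonneg _) (Finset.mem_univ i)
  have hS2 : (0:ℝ) ≤ ∑ i', ∑ x', (μ i' x' - μ' i' x')^2 :=
    Finset.sum_nonneg fun _ _ => Finset.sum_nonneg fun _ _ => sq_nonneg _
  calc |f i x - f' i x| = Real.sqrt ((f i x - f' i x)^2) := (Real.sqrt_sq_eq_abs _).symm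
    _ ≤ pairDist μ f μ' f' := Real.sqrt_le_sqrt (by linarith)

lemma tendsto_polDist {ds : ℕ → GrpI → ((j : Fin N) → Xs j) → ℝ}
    {d0 : GrpI → ((j : Fin N) → Xs j) → ℝ} (h : Tendsto ds atTop (nhds d0)) :
    Tendsto (fun n => polDist (ds n) d0) atTop (nhds 0) := by
  have hcoord : ∀ (i : GrpI) (x : (j : Fin N) → Xs j),
      Tendsto (fun n => (ds n i x - d0 i x)^2) atTop (nhds 0) := by
    intro i x
    have h1 : Tendsto (fun n => ds n i x) atTop (nhds (d0 i x)) :=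
      (tendsto_pi_nhds.1 ((tendsto_pi_nhds.1 h) i)) x
    have h2 := (h1.sub (tendsto_const_nhds (x := d0 i x))).pow 2
    simpa using h2
  have hsum : Tendsto (fun n => ∑ i, ∑ x, (ds n i x - d0 i x)^2) atTop (nhds 0) := by
    have := tendsto_finset_sum (Finset.univ : Finset GrpI)
      (fun i _ => tendsto_finset_sum (Finset.univ : Finset ((j : Fin N) → Xs j))
        (fun x _ => hcoord i x))
    simpa using this
  have hfin := (Real.continuous_sqrt.tendsto 0).comp hsum
  rw [Real.sqrt_zero] at hfin
  exact hfin

lemma tendsto_profDist {cs : ℕ → GrpI → ℝ} {ds : ℕ → GrpI → ((j : Fin N) → Xs j) → ℝ}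
    {c0 : GrpI → ℝ} {d0 : GrpI → ((j : Fin N) → Xs j) → ℝ}
    (hc : Tendsto cs atTop (nhds c0)) (hd : Tendsto ds atTop (nhds d0)) :
    Tendsto (fun n => profDist (cs n) (ds n) c0 d0) atTop (nhds 0) := by
  have hsum1 : Tendsto (fun n => ∑ i, (cs n i - c0 i)^2) atTop (nhds 0) := by
    have := tendsto_finset_sum (Finset.univ : Finset GrpI) (fun i _ => by
      have h1 : Tendsto (fun n => cs n i) atTop (nhds (c0 i)) := (tendsto_pi_nhds.1 hc) i
      have h2 := (h1.sub (tendsto_const_nhds (x := c0 i))).pow 2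
      simpa using h2)
    simpa using this
  have hsum2 : Tendsto (fun n => ∑ i, ∑ x, (ds n i x - d0 i x)^2) atTop (nhds 0) := by
    have := tendsto_finset_sum (Finset.univ : Finset GrpI)
      (fun i _ => tendsto_finset_sum (Finset.univ : Finset ((j : Fin N) → Xs j))
        (fun x _ => by
          have h1 : Tendsto (fun n => ds n i x) atTop (nhds (d0 i x)) :=
            (tendsto_pi_nhds.1 ((tendsto_pi_nhds.1 hd) i)) x
          have h2 := (h1.sub (tendsto_const_nhds (x := d0 i x))).pow 2
          simpa using h2))
    simpa using this
  have hadd := hsum1.add hsum2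
  rw [add_zero] at hadd
  have hfin := (Real.continuous_sqrt.tendsto 0).comp hadd
  rw [Real.sqrt_zero] at hfin
  exact hfin

lemma isCompact_policies :
    IsCompact {d : GrpI → ((j : Fin N) → Xs j) → ℝ | IsPolicy d} := by
  have heq : {d : GrpI → ((j : Fin N) → Xs j) → ℝ | IsPolicy d}
      = Set.univ.pi (fun _ : GrpI =>
          Set.univ.pi fun _ : (j : Fin N) → Xs j => Set.Icc (0:ℝ) 1) := by
    ext d
    simp only [Set.mem_setOf_eq, Set.mem_univ_pi, IsPolicy]
  rw [heq]
  exact isCompact_univ_pi fun _ => isCompact_univ_pi fun _ => isCompact_Icc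

namespace Game

variable (Γ : Game N Xs)

lemma UF_continuous :
    Continuous (fun p : (GrpI → ((j : Fin N) → Xs j) → ℝ) ×
        (GrpI → ((j : Fin N) → Xs j) → ℝ) × (GrpI → ((j : Fin N) → Xs j) → ℝ) =>
      Γ.UF p.1 p.2.1 p.2.2) := by
  simp only [Game.UF]
  apply continuous_finset_sum
  intro i _
  apply continuous_finset_sum
  intro x _
  have h1 : Continuous (fun p : (GrpI → ((j : Fin N) → Xs j) → ℝ) ×
      (GrpI → ((j : Fin N) → Xs j) → ℝ) × (GrpI → ((j : Fin N) → Xs j) → ℝ) => p.1 i x) :=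
    (continuous_apply x).comp ((continuous_apply i).comp continuous_fst)
  have h2 : Continuous (fun p : (GrpI → ((j : Fin N) → Xs j) → ℝ) ×
      (GrpI → ((j : Fin N) → Xs j) → ℝ) × (GrpI → ((j : Fin N) → Xs j) → ℝ) => p.2.1 i x) :=
    (continuous_apply x).comp ((continuous_apply i).comp (continuous_fst.comp continuous_snd))
  have h3 : Continuous (fun p : (GrpI → ((j : Fin N) → Xs j) → ℝ) ×
      (GrpI → ((j : Fin N) → Xs j) → ℝ) × (GrpI → ((j : Fin N) → Xs j) → ℝ) => p.2.2 i x) :=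
    (continuous_apply x).comp ((continuous_apply i).comp (continuous_snd.comp continuous_snd))
  exact (h1.mul h2).mul ((h3.mul continuous_const).sub ((continuous_const.sub h3).mul continuous_const))

lemma UF_tendsto {ds μs fs : ℕ → GrpI → ((j : Fin N) → Xs j) → ℝ}
    {d0 μ0 f0 : GrpI → ((j : Fin N) → Xs j) → ℝ}
    (hd : Tendsto ds atTop (nhds d0)) (hμ : Tendsto μs atTop (nhds μ0))
    (hf : Tendsto fs atTop (nhds f0)) :
    Tendsto (fun n => Γ.UF (ds n) (μs n) (fs n)) atTop (nhds (Γ.UF d0 μ0 f0)) := by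
  simp only [Game.UF]
  apply tendsto_finset_sum
  intro i _
  apply tendsto_finset_sum
  intro x _
  have hd1 : Tendsto (fun n => ds n i x) atTop (nhds (d0 i x)) :=
    (tendsto_pi_nhds.1 ((tendsto_pi_nhds.1 hd) i)) x
  have hμ1 : Tendsto (fun n => μs n i x) atTop (nhds (μ0 i x)) :=
    (tendsto_pi_nhds.1 ((tendsto_pi_nhds.1 hμ) i)) x
  have hf1 : Tendsto (fun n => fs n i x) atTop (nhds (f0 i x)) :=
    (tendsto_pi_nhds.1 ((tendsto_pi_nhds.1 hf) i)) x
  exact (hd1.mul hμ1).mul ((hf1.mul tendsto_const_nhds).sub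
    ((tendsto_const_nhds.sub hf1).mul tendsto_const_nhds))

set_option maxHeartbeats 1000000 in
/-- Closed-graph + maximality limit lemma for `Smax`. -/
lemma smax_limit
    (K : (GrpI → ((j : Fin N) → Xs j) → ℝ) → (GrpI → ((j : Fin N) → Xs j) → ℝ) →
      Set (GrpI → ((j : Fin N) → Xs j) → ℝ))
    (hKne : ∀ μ f, FullSupp μ → OpenBelief f → (K μ f).Nonempty)
    (hKcp : ∀ μ f, FullSupp μ → OpenBelief f → IsCompact (K μ f))
    (hKuhc : CorrUpperHemicontinuousOn (fun pf => K pf.1 pf.2)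
      {pf : (GrpI → ((j : Fin N) → Xs j) → ℝ) × (GrpI → ((j : Fin N) → Xs j) → ℝ) |
        FullSupp pf.1 ∧ OpenBelief pf.2})
    (hKlhc : CorrLowerHemicontinuousOn (fun pf => K pf.1 pf.2)
      {pf : (GrpI → ((j : Fin N) → Xs j) → ℝ) × (GrpI → ((j : Fin N) → Xs j) → ℝ) |
        FullSupp pf.1 ∧ OpenBelief pf.2})
    {μs fs ds : ℕ → GrpI → ((j : Fin N) → Xs j) → ℝ}
    {μ0 f0 d0 : GrpI → ((j : Fin N) → Xs j) → ℝ}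
    (hmemS : ∀ n, FullSupp (μs n) ∧ OpenBelief (fs n))
    (h01 : FullSupp μ0) (h02 : OpenBelief f0)
    (hμt : Tendsto μs atTop (nhds μ0)) (hft : Tendsto fs atTop (nhds f0))
    (hd : ∀ n, ds n ∈ K (μs n) (fs n))
    (hmax : ∀ n, ∀ d'' ∈ K (μs n) (fs n),
      Γ.UF d'' (μs n) (fs n) ≤ Γ.UF (ds n) (μs n) (fs n))
    (hdt : Tendsto ds atTop (nhds d0)) :
    d0 ∈ Γ.Smax K μ0 f0 := by
  have hmem0 : ((μ0, f0) : (GrpI → ((j : Fin N) → Xs j) → ℝ) ×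
      (GrpI → ((j : Fin N) → Xs j) → ℝ)) ∈
      {pf : (GrpI → ((j : Fin N) → Xs j) → ℝ) ×
        (GrpI → ((j : Fin N) → Xs j) → ℝ) | FullSupp pf.1 ∧ OpenBelief pf.2} :=
    ⟨h01, h02⟩
  have ht : Tendsto (fun n => (μs n, fs n)) atTop (nhds (μ0, f0)) :=
    hμt.prodMk_nhds hft
  have htS : Tendsto (fun n => (μs n, fs n)) atTop (nhdsWithin (μ0, f0)
      {pf : (GrpI → ((j : Fin N) → Xs j) → ℝ) ×
        (GrpI → ((j : Fin N) → Xs j) → ℝ) | FullSupp pf.1 ∧ OpenBelief pf.2}) :=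
    tendsto_nhdsWithin_of_tendsto_nhds_of_eventually_within _ ht
      (Eventually.of_forall fun n => hmemS n)
  have hΨlim : Tendsto (fun n => Γ.UF (ds n) (μs n) (fs n)) atTop
      (nhds (Γ.UF d0 μ0 f0)) := Γ.UF_tendsto hdt hμt hft
  constructor
  · -- membership
    by_contra hnot
    have hcl : IsClosed (K μ0 f0) := (hKcp μ0 f0 h01 h02).isClosed
    have hne := hKne μ0 f0 h01 h02
    set r := Metric.infDist d0 (K μ0 f0) with hrdef
    have hr : 0 < r := by
      rcases lt_or_eq_of_le (Metric.infDist_nonneg (s := K μ0 f0) (x := d0)) with h | h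
      · exact h
      · exact absurd ((hcl.mem_iff_infDist_zero hne).2 h.symm) hnot
    have hV : IsOpen {z : GrpI → ((j : Fin N) → Xs j) → ℝ |
        Metric.infDist z (K μ0 f0) < r/2} :=
      isOpen_lt (Metric.continuous_infDist_pt _) continuous_const
    have hKV : K μ0 f0 ⊆ {z | Metric.infDist z (K μ0 f0) < r/2} := by
      intro z hz
      have : Metric.infDist z (K μ0 f0) = 0 := Metric.infDist_zero_of_mem hz
      simp only [Set.mem_setOf_eq, this]
      linarith
    have hev := htS.eventually (hKuhc (μ0, f0) hmem0 _ hV hKV)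
    have hev2 : ∀ᶠ n in atTop, Metric.infDist (ds n) (K μ0 f0) < r/2 :=
      hev.mono fun n h => h (hd n)
    have hlim : Tendsto (fun n => Metric.infDist (ds n) (K μ0 f0)) atTop (nhds r) :=
      ((Metric.continuous_infDist_pt _).tendsto d0).comp hdt
    have : r ≤ r/2 := le_of_tendsto hlim (hev2.mono fun n h => h.le)
    linarith
  · -- maximality
    intro d' hd'
    apply le_of_forall_pos_le_add
    intro η hη
    have hcont : ContinuousAt (fun p : _ × _ × _ => Γ.UF p.1 p.2.1 p.2.2)
        ((d', (μ0, f0))) := Γ.UF_continuous.continuousAt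
    rw [Metric.continuousAt_iff] at hcont
    obtain ⟨ρ, hρ, hρspec⟩ := hcont η hη
    have hlhcev := htS.eventually (hKlhc (μ0, f0) hmem0 (Metric.ball d' ρ)
      Metric.isOpen_ball ⟨d', hd', Metric.mem_ball_self hρ⟩)
    have hdistev : ∀ᶠ n in atTop,
        dist (μs n, fs n) ((μ0, f0) : (GrpI → ((j : Fin N) → Xs j) → ℝ) ×
          (GrpI → ((j : Fin N) → Xs j) → ℝ)) < ρ :=
      Metric.tendsto_nhds.mp ht ρ hρ
    have hev3 : ∀ᶠ n in atTop, Γ.UF d' μ0 f0 - η ≤ Γ.UF (ds n) (μs n) (fs n) := by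
      filter_upwards [hlhcev, hdistev] with n hne2 hdist2
      obtain ⟨z, hzK, hzB⟩ := hne2
      have hd1 : dist (z, (μs n, fs n)) ((d', (μ0, f0)) :
          (GrpI → ((j : Fin N) → Xs j) → ℝ) × (GrpI → ((j : Fin N) → Xs j) → ℝ) ×
          (GrpI → ((j : Fin N) → Xs j) → ℝ)) < ρ := by
        rw [Prod.dist_eq]
        exact max_lt (Metric.mem_ball.mp hzB) hdist2
      have h4 : |Γ.UF z (μs n) (fs n) - Γ.UF d' μ0 f0| < η := by
        have := hρspec hd1
        rwa [Real.dist_eq] at this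
      have h5 : Γ.UF d' μ0 f0 - η < Γ.UF z (μs n) (fs n) := by
        rcases abs_lt.mp h4 with ⟨hl, _⟩
        linarith
      exact le_trans h5.le (hmax n z hzK)
    have := ge_of_tendsto hΨlim hev3
    linarith

end Game

end Aux5
section Aux6

open MeasureTheory Filter

/-- Pair of thresholds as a function on `GrpI`. -/
def cpair (p : ℝ × ℝ) : GrpI → ℝ := fun i =>
  match i with
  | GrpI.w => p.1
  | GrpI.b => p.2

namespace Game

variable {N : ℕ} {Xs : Fin N → Type} [∀ j, Fintype (Xs j)] [∀ j, Nonempty (Xs j)]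
variable (Γ : Game N Xs)

lemma muRE_tendsto {cs : ℕ → GrpI → ℝ} {c0 : GrpI → ℝ}
    (hc : Tendsto cs atTop (nhds c0)) (i : GrpI) (x : (j : Fin N) → Xs j) :
    Tendsto (fun n => Γ.muRE (cs n) i x) atTop (nhds (Γ.muRE c0 i x)) := by
  have hci : Tendsto (fun n => cs n i) atTop (nhds (c0 i)) := (tendsto_pi_nhds.1 hc) i
  have hGi : Tendsto (fun n => Γ.G (cs n i)) atTop (nhds (Γ.G (c0 i))) :=
    (Γ.G_continuous.tendsto _).comp hci
  simp only [Game.muRE]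
  exact tendsto_const_nhds.mul ((hGi.mul tendsto_const_nhds).add
    ((tendsto_const_nhds.sub hGi).mul tendsto_const_nhds))

lemma fRE_tendsto {cs : ℕ → GrpI → ℝ} {c0 : GrpI → ℝ}
    (hc : Tendsto cs atTop (nhds c0)) (i : GrpI) (x : (j : Fin N) → Xs j) :
    Tendsto (fun n => Γ.fRE (cs n) i x) atTop (nhds (Γ.fRE c0 i x)) := by
  have hci : Tendsto (fun n => cs n i) atTop (nhds (c0 i)) := (tendsto_pi_nhds.1 hc) i
  have hGi : Tendsto (fun n => Γ.G (cs n i)) atTop (nhds (Γ.G (c0 i))) :=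
    (Γ.G_continuous.tendsto _).comp hci
  simp only [Game.fRE]
  exact Tendsto.div (hGi.mul tendsto_const_nhds)
    ((hGi.mul tendsto_const_nhds).add ((tendsto_const_nhds.sub hGi).mul tendsto_const_nhds))
    (ne_of_gt (Γ.muRE_denom_pos c0 i x))

lemma one_div_succ_mono (φ : ℕ → ℕ) (hφ : StrictMono φ) (n : ℕ) :
    (1:ℝ)/((φ n : ℝ)+1) ≤ 1/((n:ℝ)+1) := by
  apply one_div_le_one_div_of_le (by positivity)
  have h1 : n ≤ φ n := hφ.le_apply
  have h2 : (n:ℝ) ≤ (φ n : ℝ) := by exact_mod_cast h1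
  linarith

set_option maxHeartbeats 1000000 in
/-- Pointwise upper hemicontinuity of `Smax` at a full-support pair. -/
lemma smax_uhc_pt
    (K : (GrpI → ((j : Fin N) → Xs j) → ℝ) → (GrpI → ((j : Fin N) → Xs j) → ℝ) →
      Set (GrpI → ((j : Fin N) → Xs j) → ℝ))
    (hKne : ∀ μ f, FullSupp μ → OpenBelief f → (K μ f).Nonempty)
    (hKcp : ∀ μ f, FullSupp μ → OpenBelief f → IsCompact (K μ f))
    (hKpol : ∀ μ f, FullSupp μ → OpenBelief f → K μ f ⊆ {d | IsPolicy d})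
    (hKuhc : CorrUpperHemicontinuousOn (fun pf => K pf.1 pf.2)
      {pf : (GrpI → ((j : Fin N) → Xs j) → ℝ) × (GrpI → ((j : Fin N) → Xs j) → ℝ) |
        FullSupp pf.1 ∧ OpenBelief pf.2})
    (hKlhc : CorrLowerHemicontinuousOn (fun pf => K pf.1 pf.2)
      {pf : (GrpI → ((j : Fin N) → Xs j) → ℝ) × (GrpI → ((j : Fin N) → Xs j) → ℝ) |
        FullSupp pf.1 ∧ OpenBelief pf.2})
    (μ0 f0 : GrpI → ((j : Fin N) → Xs j) → ℝ)
    (h01 : FullSupp μ0) (h02 : OpenBelief f0) (δ : ℝ) (hδ : 0 < δ) :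
    ∃ ε : ℝ, 0 < ε ∧ ∀ μ f, FullSupp μ → OpenBelief f → pairDist μ f μ0 f0 ≤ ε →
      ∀ dh ∈ Γ.Smax K μ f, ∃ d' ∈ Γ.Smax K μ0 f0, polDist dh d' ≤ δ := by
  by_contra hcon
  push_neg at hcon
  choose μs fs hμs hfs hdist dhs hdhs hfar using
    fun n : ℕ => hcon (1/((n:ℝ)+1)) (by positivity)
  have hpols : ∀ n, dhs n ∈ {d : GrpI → ((j : Fin N) → Xs j) → ℝ | IsPolicy d} :=
    fun n => hKpol (μs n) (fs n) (hμs n) (hfs n) (hdhs n).1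
  obtain ⟨d0, _, φ, hφ, hconv⟩ := isCompact_policies.tendsto_subseq hpols
  have hμt : Tendsto (fun n => μs (φ n)) atTop (nhds μ0) := by
    refine tendsto_pi_nhds.2 fun i => tendsto_pi_nhds.2 fun x => ?_
    have hb : ∀ n, ‖μs (φ n) i x - μ0 i x‖ ≤ 1/((n:ℝ)+1) := fun n => by
      rw [Real.norm_eq_abs]
      exact le_trans (abs_mu_le_pairDist _ (fs (φ n)) _ f0 i x)
        (le_trans (hdist (φ n)) (one_div_succ_mono φ hφ n))
    have h0 : Tendsto (fun n => μs (φ n) i x - μ0 i x) atTop (nhds 0) :=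
      squeeze_zero_norm hb tendsto_one_div_add_atTop_nhds_zero_nat
    have := h0.add (tendsto_const_nhds (x := μ0 i x))
    simpa using this
  have hft : Tendsto (fun n => fs (φ n)) atTop (nhds f0) := by
    refine tendsto_pi_nhds.2 fun i => tendsto_pi_nhds.2 fun x => ?_
    have hb : ∀ n, ‖fs (φ n) i x - f0 i x‖ ≤ 1/((n:ℝ)+1) := fun n => by
      rw [Real.norm_eq_abs]
      exact le_trans (abs_f_le_pairDist (μs (φ n)) _ μ0 _ i x)
        (le_trans (hdist (φ n)) (one_div_succ_mono φ hφ n))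
    have h0 : Tendsto (fun n => fs (φ n) i x - f0 i x) atTop (nhds 0) :=
      squeeze_zero_norm hb tendsto_one_div_add_atTop_nhds_zero_nat
    have := h0.add (tendsto_const_nhds (x := f0 i x))
    simpa using this
  have hd0 : d0 ∈ Γ.Smax K μ0 f0 :=
    Γ.smax_limit K hKne hKcp hKuhc hKlhc
      (fun n => ⟨hμs (φ n), hfs (φ n)⟩) h01 h02 hμt hft
      (fun n => (hdhs (φ n)).1) (fun n => (hdhs (φ n)).2) hconv
  have htend : Tendsto (fun n => polDist (dhs (φ n)) d0) atTop (nhds 0) :=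
    tendsto_polDist hconv
  obtain ⟨n, hn⟩ := (htend.eventually_lt_const hδ).exists
  have := hfar (φ n) d0 hd0
  linarith

set_option maxHeartbeats 1000000 in
/-- Near-equilibrium limit lemma: `ε`-equilibria approach controlled equilibria. -/
lemma eps_eq_close
    (K : (GrpI → ((j : Fin N) → Xs j) → ℝ) → (GrpI → ((j : Fin N) → Xs j) → ℝ) →
      Set (GrpI → ((j : Fin N) → Xs j) → ℝ))
    (hKne : ∀ μ f, FullSupp μ → OpenBelief f → (K μ f).Nonempty)
    (hKcp : ∀ μ f, FullSupp μ → OpenBelief f → IsCompact (K μ f))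
    (hKpol : ∀ μ f, FullSupp μ → OpenBelief f → K μ f ⊆ {d | IsPolicy d})
    (hKuhc : CorrUpperHemicontinuousOn (fun pf => K pf.1 pf.2)
      {pf : (GrpI → ((j : Fin N) → Xs j) → ℝ) × (GrpI → ((j : Fin N) → Xs j) → ℝ) |
        FullSupp pf.1 ∧ OpenBelief pf.2})
    (hKlhc : CorrLowerHemicontinuousOn (fun pf => K pf.1 pf.2)
      {pf : (GrpI → ((j : Fin N) → Xs j) → ℝ) × (GrpI → ((j : Fin N) → Xs j) → ℝ) |
        FullSupp pf.1 ∧ OpenBelief pf.2})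
    (δ : ℝ) (hδ : 0 < δ) :
    ∃ ε : ℝ, 0 < ε ∧ ∀ c d, Γ.IsCtrlEpsEq K ε c d →
      ∃ c' d', Γ.IsControlledEq K c' d' ∧ profDist c d c' d' ≤ δ := by
  by_contra hcon
  push_neg at hcon
  choose cs ds hce hfar using fun n : ℕ => hcon (1/((n:ℝ)+1)) (by positivity)
  simp only [Game.IsCtrlEpsEq] at hce
  choose μs fs hμs hfs hdist hbr hdK hdmax using hce
  have hpols : ∀ n, IsPolicy (ds n) :=
    fun n => hKpol (μs n) (fs n) (hμs n) (hfs n) (hdK n)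
  have hbrs : ∀ n i, cs n i = Γ.BR i (ds n i) :=
    fun n => (Γ.bestResponds_iff (cs n) (ds n)).1 (hbr n)
  have hcbound : ∀ n, cs n ∈ Set.univ.pi fun _ : GrpI =>
      Set.Icc (-(2*Γ.om)) (2*Γ.om) := by
    intro n
    rw [Set.mem_univ_pi]
    intro i
    have h1 : |∑ x, (Γ.p i x Cls.q - Γ.p i x Cls.u) * ds n i x| ≤ 2 := by
      calc |∑ x, (Γ.p i x Cls.q - Γ.p i x Cls.u) * ds n i x|
          ≤ ∑ x, |(Γ.p i x Cls.q - Γ.p i x Cls.u) * ds n i x| :=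
            Finset.abs_sum_le_sum_abs _ _
        _ ≤ ∑ x, (Γ.p i x Cls.q + Γ.p i x Cls.u) := by
            apply Finset.sum_le_sum
            intro x _
            rw [abs_mul]
            have hq : 0 < Γ.p i x Cls.q := mul_pos (Γ.pY_pos _ _) (Γ.pC_pos _ _)
            have hu : 0 < Γ.p i x Cls.u := mul_pos (Γ.pY_pos _ _) (Γ.pC_pos _ _)
            have hd01 := hpols n i x
            have h2 : |Γ.p i x Cls.q - Γ.p i x Cls.u| ≤ Γ.p i x Cls.q + Γ.p i x Cls.u :=
              abs_le.2 ⟨by linarith, by linarith⟩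
            have h3 : |ds n i x| ≤ 1 := abs_le.2 ⟨by linarith [hd01.1], hd01.2⟩
            calc |Γ.p i x Cls.q - Γ.p i x Cls.u| * |ds n i x|
                ≤ (Γ.p i x Cls.q + Γ.p i x Cls.u) * 1 :=
                  mul_le_mul h2 h3 (abs_nonneg _) (by linarith)
              _ = Γ.p i x Cls.q + Γ.p i x Cls.u := mul_one _
        _ = 2 := by rw [Finset.sum_add_distrib, Γ.p_sum, Γ.p_sum]; norm_num
    have h4 : |cs n i| ≤ 2 * Γ.om := by
      rw [hbrs n i, Game.BR, abs_mul, abs_of_pos Γ.om_pos]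
      calc Γ.om * |∑ x, (Γ.p i x Cls.q - Γ.p i x Cls.u) * ds n i x|
          ≤ Γ.om * 2 := by
            apply mul_le_mul_of_nonneg_left h1 Γ.om_pos.le
        _ = 2 * Γ.om := by ring
    rcases abs_le.1 h4 with ⟨hl, hh⟩
    exact ⟨by linarith, hh⟩
  have hmemT : ∀ n, ((cs n, ds n)) ∈
      ((Set.univ.pi fun _ : GrpI => Set.Icc (-(2*Γ.om)) (2*Γ.om)) ×ˢ
        {d : GrpI → ((j : Fin N) → Xs j) → ℝ | IsPolicy d}) :=
    fun n => ⟨hcbound n, hpols n⟩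
  have hTc : IsCompact ((Set.univ.pi fun _ : GrpI => Set.Icc (-(2*Γ.om)) (2*Γ.om)) ×ˢ
      {d : GrpI → ((j : Fin N) → Xs j) → ℝ | IsPolicy d}) :=
    (isCompact_univ_pi fun _ => isCompact_Icc).prod isCompact_policies
  obtain ⟨⟨c0, d0⟩, _, φ, hφ, hconv⟩ := hTc.tendsto_subseq hmemT
  have hct : Tendsto (fun n => cs (φ n)) atTop (nhds c0) := by
    have := (continuous_fst.tendsto ((c0, d0) :
      (GrpI → ℝ) × (GrpI → ((j : Fin N) → Xs j) → ℝ))).comp hconv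
    exact this
  have hdt : Tendsto (fun n => ds (φ n)) atTop (nhds d0) := by
    have := (continuous_snd.tendsto ((c0, d0) :
      (GrpI → ℝ) × (GrpI → ((j : Fin N) → Xs j) → ℝ))).comp hconv
    exact this
  have hμt : Tendsto (fun n => μs (φ n)) atTop (nhds (Γ.muRE c0)) := by
    refine tendsto_pi_nhds.2 fun i => tendsto_pi_nhds.2 fun x => ?_
    have hA : Tendsto (fun n => Γ.muRE (cs (φ n)) i x) atTop (nhds (Γ.muRE c0 i x)) :=
      Γ.muRE_tendsto hct i x
    have hb : ∀ n, ‖μs (φ n) i x - Γ.muRE (cs (φ n)) i x‖ ≤ 1/((n:ℝ)+1) := fun n => by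
      rw [Real.norm_eq_abs]
      exact le_trans (abs_mu_le_pairDist _ (fs (φ n)) _ (Γ.fRE (cs (φ n))) i x)
        (le_trans (hdist (φ n)) (one_div_succ_mono φ hφ n))
    have h0 : Tendsto (fun n => μs (φ n) i x - Γ.muRE (cs (φ n)) i x) atTop (nhds 0) :=
      squeeze_zero_norm hb tendsto_one_div_add_atTop_nhds_zero_nat
    have := h0.add hA
    simpa using this
  have hft : Tendsto (fun n => fs (φ n)) atTop (nhds (Γ.fRE c0)) := by
    refine tendsto_pi_nhds.2 fun i => tendsto_pi_nhds.2 fun x => ?_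
    have hA : Tendsto (fun n => Γ.fRE (cs (φ n)) i x) atTop (nhds (Γ.fRE c0 i x)) :=
      Γ.fRE_tendsto hct i x
    have hb : ∀ n, ‖fs (φ n) i x - Γ.fRE (cs (φ n)) i x‖ ≤ 1/((n:ℝ)+1) := fun n => by
      rw [Real.norm_eq_abs]
      exact le_trans (abs_f_le_pairDist (μs (φ n)) _ (Γ.muRE (cs (φ n))) _ i x)
        (le_trans (hdist (φ n)) (one_div_succ_mono φ hφ n))
    have h0 : Tendsto (fun n => fs (φ n) i x - Γ.fRE (cs (φ n)) i x) atTop (nhds 0) :=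
      squeeze_zero_norm hb tendsto_one_div_add_atTop_nhds_zero_nat
    have := h0.add hA
    simpa using this
  have hd0 : d0 ∈ Γ.Smax K (Γ.muRE c0) (Γ.fRE c0) :=
    Γ.smax_limit K hKne hKcp hKuhc hKlhc
      (fun n => ⟨hμs (φ n), hfs (φ n)⟩) (Γ.muRE_mem c0) (Γ.fRE_mem c0) hμt hft
      (fun n => hdK (φ n)) (fun n => hdmax (φ n)) hdt
  have hbr0 : Γ.BestResponds c0 d0 := by
    refine (Γ.bestResponds_iff c0 d0).2 fun i => ?_
    have h1 : Tendsto (fun n => cs (φ n) i) atTop (nhds (c0 i)) := (tendsto_pi_nhds.1 hct) i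
    have h2 : Tendsto (fun n => Γ.BR i (ds (φ n) i)) atTop (nhds (Γ.BR i (d0 i))) := by
      simp only [Game.BR]
      apply Tendsto.const_mul
      apply tendsto_finset_sum
      intro x _
      exact tendsto_const_nhds.mul
        ((tendsto_pi_nhds.1 ((tendsto_pi_nhds.1 hdt) i)) x)
    have h3 : (fun n => cs (φ n) i) = fun n => Γ.BR i (ds (φ n) i) :=
      funext fun n => hbrs (φ n) i
    rw [h3] at h1
    exact tendsto_nhds_unique h1 h2
  have hEq : Γ.IsControlledEq K c0 d0 := ⟨hd0.1, hbr0, hd0.2⟩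
  have htpd := tendsto_profDist hct hdt
  obtain ⟨n, hn⟩ := (htpd.eventually_lt_const hδ).exists
  have := hfar (φ n) c0 d0 hEq
  linarith

end Game

end Aux6
/-- **Theorem 3.** Any continuous control is not fragile: if for the given `X`
the correspondence `(μ, f) ↦ k(X, μ, f)` on `Δ°(I×X) × (0,1)^{I×X}` is
nonempty- and compact-valued, upper hemicontinuous, and lower hemicontinuous,
then for every game on `X` and every `δ > 0` there exists `ε > 0` such that
(1) near any discriminatory equilibrium, firm-optimal policies under `k` at any
`(μ*, f*)` within `ε` of `(μ*_RE, f*_RE)` are within `δ` of firm-optimal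
policies at `(μ*_RE, f*_RE)`, and (2) every `k`-controlled `ε`-equilibrium is
within `δ` of some `k`-controlled equilibrium. -/
theorem continuous_control_not_fragile
    {N : ℕ} {Xs : Fin N → Type} [∀ j, Fintype (Xs j)] [∀ j, Nonempty (Xs j)]
    (K : (GrpI → ((j : Fin N) → Xs j) → ℝ) → (GrpI → ((j : Fin N) → Xs j) → ℝ) →
      Set (GrpI → ((j : Fin N) → Xs j) → ℝ))
    (hKne : ∀ μ f, FullSupp μ → OpenBelief f → (K μ f).Nonempty)
    (hKcp : ∀ μ f, FullSupp μ → OpenBelief f → IsCompact (K μ f))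
    (hKpol : ∀ μ f, FullSupp μ → OpenBelief f → K μ f ⊆ {d | IsPolicy d})
    (hKuhc : CorrUpperHemicontinuousOn (fun pf => K pf.1 pf.2)
      {pf : (GrpI → ((j : Fin N) → Xs j) → ℝ) × (GrpI → ((j : Fin N) → Xs j) → ℝ) |
        FullSupp pf.1 ∧ OpenBelief pf.2})
    (hKlhc : CorrLowerHemicontinuousOn (fun pf => K pf.1 pf.2)
      {pf : (GrpI → ((j : Fin N) → Xs j) → ℝ) × (GrpI → ((j : Fin N) → Xs j) → ℝ) |
        FullSupp pf.1 ∧ OpenBelief pf.2})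
    (Γ : Game N Xs) (hone : Γ.OneNotLV) (δ : ℝ) (hδ : 0 < δ) :
    ∃ ε : ℝ, 0 < ε ∧
      (∀ c d, Γ.IsEquilibrium c d → c GrpI.w ≠ c GrpI.b →
        ∀ μ f, FullSupp μ → OpenBelief f →
          pairDist μ f (Γ.muRE c) (Γ.fRE c) ≤ ε →
          ∀ dh ∈ Γ.Smax K μ f,
            ∃ d' ∈ Γ.Smax K (Γ.muRE c) (Γ.fRE c), polDist dh d' ≤ δ) ∧
      (∀ c d, Γ.IsCtrlEpsEq K ε c d →
        ∃ c' d', Γ.IsControlledEq K c' d' ∧ profDist c d c' d' ≤ δ) := by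
  classical
  obtain ⟨ε2, hε2pos, hε2⟩ := Γ.eps_eq_close K hKne hKcp hKpol hKuhc hKlhc δ hδ
  have hpt : ∀ p : ℝ × ℝ, ∃ ε : ℝ, 0 < ε ∧
      ∀ μ f, FullSupp μ → OpenBelief f →
        pairDist μ f (Γ.muRE (cpair p)) (Γ.fRE (cpair p)) ≤ ε →
        ∀ dh ∈ Γ.Smax K μ f,
          ∃ d' ∈ Γ.Smax K (Γ.muRE (cpair p)) (Γ.fRE (cpair p)), polDist dh d' ≤ δ :=
    fun p => Γ.smax_uhc_pt K hKne hKcp hKpol hKuhc hKlhc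
      (Γ.muRE (cpair p)) (Γ.fRE (cpair p)) (Γ.muRE_mem _) (Γ.fRE_mem _) δ hδ
  choose εf hεf using hpt
  have h0F : (0:ℝ) ∈ Γ.Fcand := by
    right
    rw [Finset.mem_coe, Finset.mem_image]
    exact ⟨∅, Finset.mem_powerset.2 (Finset.empty_subset _), by simp⟩
  have h0CF : (0:ℝ) ∈ Γ.Fcand_finite.toFinset := Γ.Fcand_finite.mem_toFinset.2 h0F
  have hCne : (Γ.Fcand_finite.toFinset ×ˢ Γ.Fcand_finite.toFinset).Nonempty :=
    ⟨((0:ℝ), (0:ℝ)), Finset.mem_product.2 ⟨h0CF, h0CF⟩⟩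
  set ε1 := (Γ.Fcand_finite.toFinset ×ˢ Γ.Fcand_finite.toFinset).inf' hCne εf with hε1
  have hε1pos : 0 < ε1 :=
    (Finset.lt_inf'_iff (f := εf) hCne).2 (fun p _ => (hεf p).1)
  refine ⟨min ε1 ε2, lt_min hε1pos hε2pos, ?_, ?_⟩
  · intro c d hEq hdisc μ f hμ hf hdist dh hdh
    have hcw : c GrpI.w ∈ Γ.Fcand := Γ.eq_threshold_mem hEq GrpI.w
    have hcb : c GrpI.b ∈ Γ.Fcand := Γ.eq_threshold_mem hEq GrpI.b
    have hpm : ((c GrpI.w, c GrpI.b) : ℝ × ℝ) ∈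
        Γ.Fcand_finite.toFinset ×ˢ Γ.Fcand_finite.toFinset :=
      Finset.mem_product.2 ⟨Γ.Fcand_finite.mem_toFinset.2 hcw,
        Γ.Fcand_finite.mem_toFinset.2 hcb⟩
    have hcpc : cpair (c GrpI.w, c GrpI.b) = c := funext fun i => by cases i <;> rfl
    have hεle : min ε1 ε2 ≤ εf (c GrpI.w, c GrpI.b) :=
      le_trans (min_le_left _ _) (Finset.inf'_le _ hpm)
    have hmain := (hεf (c GrpI.w, c GrpI.b)).2 μ f hμ hf
      (by rw [hcpc]; exact le_trans hdist hεle) dh hdh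
    rw [hcpc] at hmain
    exact hmain
  · intro c d hce
    apply hε2
    obtain ⟨μ, f, h1, h2, h3, h4, h5, h6⟩ := hce
    exact ⟨μ, f, h1, h2, le_trans h3 (min_le_right _ _), h4, h5, h6⟩
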